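/- Let 𝔵 be a full λ-parameter, s(*) ∈ I_𝔵, t* ∈ J_{s(*)}, and let α be an ordinal with ω ≤ α < α*_𝔵. Assume condition ⊛_{2,α}(s(*), t*) holds. Then the expanded models (M_𝔵, (s(*), e)) and (M_𝔵, (s(*), x_{t*})), obtained from M_𝔵 by adding one constant, are EF_{α,λ}-equivalent. -/

import Mathlib

open FirstOrder

universe u

namespace EFGame

variable (L : FirstOrder.Language.{0, 0})

/-- A set of pairs `f ⊆ M × N` is a partial isomorphism from `M` into `N` when it is the
graph of an injective partial function which preserves all atomic formulas (and hence
their negations). -/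
def IsPartialIso (M N : Type) [L.Structure M] [L.Structure N] (f : Set (M × N)) : Prop :=
  (∀ p ∈ f, ∀ q ∈ f, p.1 = q.1 ↔ p.2 = q.2) ∧
  (∀ (n : ℕ) (φ : L.BoundedFormula Empty n), φ.IsAtomic →
    ∀ xs : Fin n → M × N, (∀ i, xs i ∈ f) →
      (φ.Realize (fun e => e.elim) (fun i => (xs i).1) ↔
        φ.Realize (fun e => e.elim) (fun i => (xs i).2)))

/-- The isomorphism player ISO has a winning strategy in the Ehrenfeucht–Fraïssé game
`⅁^α_μ(f₀, M, N)` of length `α` where the anti-isomorphism player AIS plays pairs of sets of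
total size `< 1 + μ`.  A strategy is encoded by the ISO responses `σ β A` (the partial
isomorphism `f_{β+1}`) to a history `A` of AIS moves; it may only depend on the part of the
history already played, and all its responses must be legal moves: partial isomorphisms,
increasing with `β`, extending `f₀`, and covering the sets played by AIS.  (At a limit stage
`β` the current position is `f_β = ⋃_{γ<β} σ γ A`, which is automatically a partial
isomorphism, so ISO wins a play iff all the responses along it are legal.) -/
def WinIso (M N : Type) [L.Structure M] [L.Structure N] (f₀ : Set (M × N))
    (α : Ordinal.{0}) (μ : Cardinal.{0}) : Prop :=
  ∃ σ : Ordinal.{0} → (Ordinal.{0} → Set M × Set N) → Set (M × N),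
    (∀ β A A', (∀ γ ≤ β, A γ = A' γ) → σ β A = σ β A') ∧
    (∀ A : Ordinal.{0} → Set M × Set N,
      (∀ β, β < α → Cardinal.mk ↥(A β).1 + Cardinal.mk ↥(A β).2 < 1 + μ) →
      ∀ β, β < α →
        IsPartialIso L M N (σ β A) ∧
        f₀ ⊆ σ β A ∧
        (∀ γ, γ < β → σ γ A ⊆ σ β A) ∧
        (A β).1 ⊆ Prod.fst '' σ β A ∧
        (A β).2 ⊆ Prod.snd '' σ β A)

/-- `M` and `N` are `EF_{α,μ}`-equivalent: ISO has a winning strategy in the game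
`⅁^α_μ(M, N)` (starting from the empty partial isomorphism). -/
def EFEquiv (M N : Type) [L.Structure M] [L.Structure N]
    (α : Ordinal.{0}) (μ : Cardinal.{0}) : Prop :=
  WinIso L M N ∅ α μ

/-- The expansions `(M, c₁)` and `(N, c₂)` of `M` and `N` by one new constant are
`EF_{α,μ}`-equivalent.  The expansions are formed in the language `L[[Unit]]` obtained
from `L` by adding one constant symbol, interpreted as `c₁` in `M` and as `c₂` in `N`. -/
def EFEquivC (M N : Type) [L.Structure M] [L.Structure N] (c₁ : M) (c₂ : N)
    (α : Ordinal.{0}) (μ : Cardinal.{0}) : Prop :=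
  letI : (Language.constantsOn Unit).Structure M :=
    Language.constantsOn.structure (fun _ => c₁)
  letI : (Language.constantsOn Unit).Structure N :=
    Language.constantsOn.structure (fun _ => c₂)
  EFEquiv (L.sum (Language.constantsOn Unit)) M N α μ

end EFGame


open FirstOrder

/-- A full `λ`-parameter `𝔵` (Definition 1.1 of Shelah's paper 836). It consists of a
cardinal `λ`, an ordinal `α* ≤ λ`, a set `I` with a set `S ⊆ I × I`, sets `u_s ⊆ λ` for
`s ∈ I`, a set `J` with a map `t ↦ s_t` to `I`, a set `T ⊆ J × J` projecting into `S`,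
and, for fullness, each `t ∈ J` carries a function `g_t : u_{s_t} → α_t` (`α_t < α*`) and a
non-decreasing function `h_t : u_{s_t} → λ`, with `t` uniquely determined by
`(s_t, g_t, h_t)`.  (Functions on `u_s` are coded as total functions on ordinals, all
conditions referring only to their values on `u_s`.) -/
structure FullParam where
  lam : Cardinal.{0}
  alphaStar : Ordinal.{0}
  alphaStar_le : alphaStar ≤ lam.ord
  I : Type
  S : Set (I × I)
  u : I → Set Ordinal.{0}
  u_lt : ∀ s, ∀ γ ∈ u s, γ < lam.ord
  J : Type
  st : J → I
  T : Set (J × J)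
  T_S : ∀ p ∈ T, (st p.1, st p.2) ∈ S
  alphat : J → Ordinal.{0}
  alphat_lt : ∀ t, alphat t < alphaStar
  gt : J → Ordinal.{0} → Ordinal.{0}
  gt_lt : ∀ t, ∀ γ ∈ u (st t), gt t γ < alphat t
  ht : J → Ordinal.{0} → Ordinal.{0}
  ht_lt : ∀ t, ∀ γ ∈ u (st t), ht t γ < lam.ord
  ht_mono : ∀ t, ∀ γ₁ ∈ u (st t), ∀ γ₂ ∈ u (st t), γ₁ ≤ γ₂ → ht t γ₁ ≤ ht t γ₂
  uniq : ∀ t₁ t₂, st t₁ = st t₂ →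
    (∀ γ ∈ u (st t₁), gt t₁ γ = gt t₂ γ) →
    (∀ γ ∈ u (st t₁), ht t₁ γ = ht t₂ γ) → t₁ = t₂

namespace FullParam

variable (x : FullParam)

/-- `J_s = {t ∈ J : s_t = s}`. -/
def Js (s : x.I) : Type := {t : x.J // x.st t = s}

/-- `𝔾_s`, the free group on the generators `{x_t : t ∈ J_s}`. -/
abbrev G (s : x.I) : Type := FreeGroup (x.Js s)

/-- The universe of the model `M_𝔵`: pairs `(s, x)` with `s ∈ I`, `x ∈ 𝔾_s`. -/
abbrev M : Type := Σ s : x.I, x.G s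

/-- `𝔾_{s₁,s₂}`: the subgroup of `𝔾_{s₁} × 𝔾_{s₂}` generated by the pairs of generators
`(x_{t₁}, x_{t₂})` with `(t₁, t₂) ∈ T`, `s_{t₁} = s₁`, `s_{t₂} = s₂`. -/
def Gpair (s₁ s₂ : x.I) : Subgroup (x.G s₁ × x.G s₂) :=
  Subgroup.closure {p | ∃ (t₁ t₂ : x.J) (h₁ : x.st t₁ = s₁) (h₂ : x.st t₂ = s₂),
    (t₁, t₂) ∈ x.T ∧ p = (FreeGroup.of ⟨t₁, h₁⟩, FreeGroup.of ⟨t₂, h₂⟩)}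

/-- The union of the binary relations `Q_{s₁,s₂}` (`(s₁,s₂) ∈ S`) of `M_𝔵`:
`((s₁,x₁),(s₂,x₂)) ∈ Q` iff `(s₁,s₂) ∈ S` and `(x₁,x₂) ∈ 𝔾_{s₁,s₂}`. -/
def Q : Set (x.M × x.M) :=
  {p | (p.1.1, p.2.1) ∈ x.S ∧ (p.1.2, p.2.2) ∈ x.Gpair p.1.1 p.2.1}

open Classical in
/-- The unary function `F_{s,a}` of `M_𝔵`: `(s,y) ↦ (s, a·y)` on `P_s`, the identity off
`P_s`. -/
noncomputable def F (s : x.I) (a : x.G s) (m : x.M) : x.M :=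
  if h : m.1 = s then ⟨s, a * cast (congrArg x.G h) m.2⟩ else m

/-- An automorphism of the submodel `M_{I'}` of `M_𝔵` (coded as a bijection of `M_𝔵` which
is the identity off the universe `⋃ {P_s : s ∈ I'}` of `M_{I'}`, and on it preserves each
predicate `P_s`, each relation `Q_{s₁,s₂}`, and each function `F_{s,a}` with `s ∈ I'`). -/
structure Aut (I' : Set x.I) where
  toFun : x.M → x.M
  invFun : x.M → x.M
  left_inv : Function.LeftInverse invFun toFun
  right_inv : Function.RightInverse invFun toFun
  fix_off : ∀ m : x.M, m.1 ∉ I' → toFun m = m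
  presP : ∀ m : x.M, (toFun m).1 = m.1
  presQ : ∀ m₁ m₂ : x.M, m₁.1 ∈ I' → m₂.1 ∈ I' →
    ((m₁, m₂) ∈ x.Q ↔ (toFun m₁, toFun m₂) ∈ x.Q)
  presF : ∀ s ∈ I', ∀ (a : x.G s), ∀ m : x.M, m.1 ∈ I' →
    toFun (x.F s a m) = x.F s a (toFun m)

/-- `c̄ = ⟨c_s : s ∈ I'⟩ ∈ C_{I'}` (only the values of `c` on `I'` are relevant):
`(c_{s₁}, c_{s₂}) ∈ 𝔾_{s₁,s₂}` whenever `s₁, s₂ ∈ I'` and `(s₁,s₂) ∈ S`. -/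
def inC (I' : Set x.I) (c : ∀ s : x.I, x.G s) : Prop :=
  ∀ s₁ s₂ : x.I, s₁ ∈ I' → s₂ ∈ I' → (s₁, s₂) ∈ x.S → (c s₁, c s₂) ∈ x.Gpair s₁ s₂

open Classical in
/-- The map `f_c̄ : (s,y) ↦ (s, y·c_s)` for `s ∈ I'`, extended by the identity off the
universe of `M_{I'}`. -/
noncomputable def fc (I' : Set x.I) (c : ∀ s : x.I, x.G s) (m : x.M) : x.M :=
  if m.1 ∈ I' then ⟨m.1, m.2 * c m.1⟩ else m

/-- The vocabulary of `M_𝔵`: unary predicates `P_s` (`s ∈ I`), binary predicates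
`Q_{s₁,s₂}` (`(s₁,s₂) ∈ S`), unary function symbols `F_{s,a}` (`s ∈ I`, `a ∈ 𝔾_s`). -/
def lang : FirstOrder.Language.{0, 0} where
  Functions n := match n with
    | 1 => Σ s : x.I, x.G s
    | _ => Empty
  Relations n := match n with
    | 1 => x.I
    | 2 => ↥x.S
    | _ => Empty

/-- `M_𝔵` as a first-order structure in the vocabulary `lang 𝔵`. -/
noncomputable instance strM : x.lang.Structure x.M where
  funMap {n} f v :=
    match n, f, v with
    | 1, f, v => x.F f.1 f.2 (v 0)
    | 0, f, _ => f.elim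
    | (_ + 2), f, _ => f.elim
  RelMap {n} r v :=
    match n, r, v with
    | 1, s, v => (v 0).1 = s
    | 2, r, v => (v 0).1 = r.val.1 ∧ (v 1).1 = r.val.2 ∧ ((v 0), (v 1)) ∈ x.Q
    | 0, r, _ => r.elim
    | (_ + 3), r, _ => r.elim

end FullParam

namespace FullParam

variable (x : FullParam)

/-- An element of `𝒢_𝔵 = ⋃{𝒢_{α,β} : α < α*_𝔵, β < λ}`: a non-decreasing function
`g : β → α` with `α < α*_𝔵`, `β < λ` (coded as a total function on ordinals; only the
values on `{γ : γ < β}` are relevant). -/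
structure GFun where
  alpha : Ordinal.{0}
  beta : Ordinal.{0}
  alpha_lt : alpha < x.alphaStar
  beta_lt : beta < x.lam.ord
  g : Ordinal.{0} → Ordinal.{0}
  g_lt : ∀ γ, γ < beta → g γ < alpha
  g_mono : ∀ γ₁ γ₂, γ₁ ≤ γ₂ → γ₂ < beta → g γ₁ ≤ g γ₂

variable {x}

/-- `h_g : β → λ`, `h_g(γ) =` the least `β' ≤ β` such that `β' = β` or `g(β') > g(γ)`. -/
noncomputable def GFun.h (G : x.GFun) (γ : Ordinal.{0}) : Ordinal.{0} :=
  sInf {β' | β' ≤ G.beta ∧ (β' = G.beta ∨ G.g γ < G.g β')}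

variable (x)

/-- `t(s, g↾u_s, h↾u_s)` is well defined: there is a (necessarily unique) `t ∈ J` with
`s_t = s`, `g_t = g↾u_s` and `h_t = h↾u_s`. -/
def wellDef (s : x.I) (g h : Ordinal.{0} → Ordinal.{0}) : Prop :=
  ∃ t : x.J, x.st t = s ∧ (∀ γ ∈ x.u s, x.gt t γ = g γ) ∧ (∀ γ ∈ x.u s, x.ht t γ = h γ)

/-- `I_g = {s ∈ I : u_s ⊆ β and t(s, g↾u_s, h_g↾u_s) is well defined}`. -/
def Ig (G : x.GFun) : Set x.I :=
  {s | (∀ γ ∈ x.u s, γ < G.beta) ∧ x.wellDef s G.g G.h}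

open Classical in
/-- The family `c̄_g = ⟨c_{g,s} : s ∈ I_g⟩`, `c_{g,s} = x_{t(s, g↾u_s, h_g↾u_s)} ∈ 𝔾_s`
(extended by the identity element where `t(s, g↾u_s, h_g↾u_s)` is not well defined). -/
noncomputable def cg (G : x.GFun) (s : x.I) : x.G s :=
  if hw : x.wellDef s G.g G.h then FreeGroup.of ⟨hw.choose, hw.choose_spec.1⟩ else 1

/-- `γ* = sup{γ + 1 : γ ∈ u_{s}}`. -/
noncomputable def gammaStar (s : x.I) : Ordinal.{0} :=
  sSup ((fun γ => γ + 1) '' x.u s)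

/-- Condition `⊛_{2,α}(s(*), t*)` of Claim 1.7(2): (i) `λ` is regular and `|u_s| < λ` for
all `s`; (ii) any `g ∈ 𝒢_𝔵` whose domain includes `u_s` yields a well-defined
`t(s, g↾u_s, h_g↾u_s)`; (iii) if `t₁, t₂` project into `S` and their `g`- and `h`-parts
have a common extension of the form `(g, h_g)` with `g ∈ 𝒢_𝔵`, then `(t₁,t₂) ∈ T`;
(iv) `t* = t(s(*), g₀, h₀)` with `g₀` constantly `0` and `h₀` constantly `γ*` on
`u_{s(*)}`. (The condition does not depend on the ordinal `α`.) -/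
def Star2 (sStar : x.I) (tStar : x.J) : Prop :=
  (x.lam.IsRegular ∧ ∀ s : x.I, Cardinal.mk ↥(x.u s) < Cardinal.lift.{1} x.lam) ∧
  (∀ (s : x.I) (G : x.GFun), (∀ γ ∈ x.u s, γ < G.beta) → x.wellDef s G.g G.h) ∧
  (∀ t₁ t₂ : x.J, (x.st t₁, x.st t₂) ∈ x.S →
    (∃ G : x.GFun,
      (∀ γ ∈ x.u (x.st t₁), γ < G.beta ∧ x.gt t₁ γ = G.g γ ∧ x.ht t₁ γ = G.h γ) ∧
      (∀ γ ∈ x.u (x.st t₂), γ < G.beta ∧ x.gt t₂ γ = G.g γ ∧ x.ht t₂ γ = G.h γ)) →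
    (t₁, t₂) ∈ x.T) ∧
  (x.st tStar = sStar ∧ (∀ γ ∈ x.u sStar, x.gt tStar γ = 0) ∧
    (∀ γ ∈ x.u sStar, x.ht tStar γ = x.gammaStar sStar))

end FullParam
namespace Shelah836

open FullParam Set

lemma sSup_lt_ord {lam : Cardinal.{0}} (hreg : lam.IsRegular) (S : Set Ordinal.{0})
    (hcard : Cardinal.mk ↥S < Cardinal.lift.{1} lam) (hlt : ∀ o ∈ S, o < lam.ord) :
    sSup S < lam.ord := by
  rcases S.eq_empty_or_nonempty with rfl | hne
  · rw [csSup_empty]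
    exact hreg.ord_pos
  · have hsub : S ⊆ Set.Iio lam.ord := fun o ho => hlt o ho
    haveI : Small.{0} ↥S := small_subset hsub
    set f : Shrink.{0} ↥S → Ordinal.{0} := fun i => ((equivShrink ↥S).symm i).val with hf
    have hcard' : Cardinal.mk (Shrink.{0} ↥S) < lam := by
      have h := Cardinal.lift_mk_shrink''.{1, 0} (↥S)
      rw [← Cardinal.lift_lt.{0, 1}, h]
      exact hcard
    have h1 : iSup f < lam.ord := by
      refine Cardinal.iSup_lt_ord_lift_of_isRegular hreg ?_ fun i => hlt _ ((equivShrink ↥S).symm i).2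
      rwa [Cardinal.lift_id]
    refine lt_of_le_of_lt (csSup_le hne fun o ho => ?_) h1
    have h2 : f (equivShrink ↥S ⟨o, ho⟩) = o := by simp [hf]
    rw [← h2]
    exact le_ciSup (Ordinal.bddAbove_range f) _

section Construction

variable (x : FullParam) (sStar : x.I)

/-- sup of the `γ*`-values of the first components of AIS's move at stage `γ`. -/
noncomputable def eA (A : Ordinal.{0} → Set x.M × Set x.M) (γ : Ordinal.{0}) : Ordinal.{0} :=
  sSup ((fun m => x.gammaStar m.1) '' ((A γ).1 ∪ (A γ).2))

/-- the domain used at stage `β`. -/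
noncomputable def Dd (A : Ordinal.{0} → Set x.M × Set x.M) (β : Ordinal.{0}) : Ordinal.{0} :=
  x.gammaStar sStar ⊔ sSup (eA x A '' Set.Iic β)

/-- the function `g` used at stage `β`. -/
noncomputable def gg (A : Ordinal.{0} → Set x.M × Set x.M) (β γ : Ordinal.{0}) : Ordinal.{0} :=
  if γ < x.gammaStar sStar then 0
  else 1 + sInf {δ | δ = β ∨ (δ ≤ β ∧ γ < Dd x sStar A δ)}

/-- `h_g` for a raw pair `(g, b)`. -/
noncomputable def hh (g : Ordinal.{0} → Ordinal.{0}) (b γ : Ordinal.{0}) : Ordinal.{0} :=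
  sInf {ζ | ζ ≤ b ∧ (ζ = b ∨ g γ < g ζ)}

/-- the index sets `I'` used at stage `β`. -/
def Ipr (A : Ordinal.{0} → Set x.M × Set x.M) (β : Ordinal.{0}) : Set x.I :=
  {s | ∀ γ ∈ x.u s, γ < Dd x sStar A β}

open Classical in
/-- the family `c̄` associated to a raw pair `(g, b)`. -/
noncomputable def ccg (g : Ordinal.{0} → Ordinal.{0}) (b : Ordinal.{0}) (s : x.I) : x.G s :=
  if hw : x.wellDef s g (hh g b) then FreeGroup.of ⟨hw.choose, hw.choose_spec.1⟩ else 1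

/-- the graph of `f_{c̄} ↾ M_{I'}`. -/
def grphg (I' : Set x.I) (c : ∀ s : x.I, x.G s) : Set (x.M × x.M) :=
  {p | p.1.1 ∈ I' ∧ p.2 = x.fc I' c p.1}

end Construction

section Facts

variable (x : FullParam) (sStar : x.I) (A : Ordinal.{0} → Set x.M × Set x.M)

lemma lt_gammaStar {s : x.I} {γ : Ordinal.{0}} (hγ : γ ∈ x.u s) : γ < x.gammaStar s := by
  have hb : BddAbove ((fun γ => γ + 1) '' x.u s) := by
    refine ⟨x.lam.ord, ?_⟩
    rintro _ ⟨γ', hγ', rfl⟩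
    show γ' + 1 ≤ x.lam.ord
    rw [Ordinal.add_one_eq_succ]
    exact Order.succ_le_of_lt (x.u_lt s γ' hγ')
  have h1 : γ < γ + 1 := by
    rw [Ordinal.add_one_eq_succ]; exact Order.lt_succ γ
  exact h1.trans_le (le_csSup hb ⟨γ, hγ, rfl⟩)

lemma gammaStar_lt (hreg : x.lam.IsRegular)
    (hucard : ∀ s : x.I, Cardinal.mk ↥(x.u s) < Cardinal.lift.{1} x.lam) (s : x.I) :
    x.gammaStar s < x.lam.ord := by
  refine sSup_lt_ord hreg _ (Cardinal.mk_image_le.trans_lt (hucard s)) ?_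
  rintro _ ⟨γ', hγ', rfl⟩
  show γ' + 1 < x.lam.ord
  rw [Ordinal.add_one_eq_succ]
  exact (Cardinal.isSuccLimit_ord hreg.aleph0_le).succ_lt (x.u_lt s γ' hγ')

lemma eA_lt (hreg : x.lam.IsRegular)
    (hucard : ∀ s : x.I, Cardinal.mk ↥(x.u s) < Cardinal.lift.{1} x.lam)
    {γ : Ordinal.{0}} (hA : Cardinal.mk ↥((A γ).1 ∪ (A γ).2) < x.lam) :
    eA x A γ < x.lam.ord := by
  refine sSup_lt_ord hreg _ ?_ ?_
  · have h1 := Cardinal.mk_image_le_lift (f := fun m : x.M => x.gammaStar m.1)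
      (s := (A γ).1 ∪ (A γ).2)
    rw [Cardinal.lift_id'] at h1
    exact h1.trans_lt (Cardinal.lift_lt.mpr hA)
  · rintro _ ⟨m, _, rfl⟩
    exact gammaStar_lt x hreg hucard m.1

lemma bddAbove_eA (hreg : x.lam.IsRegular)
    (hucard : ∀ s : x.I, Cardinal.mk ↥(x.u s) < Cardinal.lift.{1} x.lam)
    {β : Ordinal.{0}} (hA : ∀ γ ≤ β, Cardinal.mk ↥((A γ).1 ∪ (A γ).2) < x.lam) :
    BddAbove (eA x A '' Set.Iic β) := by
  refine ⟨x.lam.ord, ?_⟩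
  rintro _ ⟨γ, hγ, rfl⟩
  exact (eA_lt x A hreg hucard (hA γ hγ)).le

lemma Dd_lt (hreg : x.lam.IsRegular)
    (hucard : ∀ s : x.I, Cardinal.mk ↥(x.u s) < Cardinal.lift.{1} x.lam)
    {β : Ordinal.{0}} (hβ : β < x.lam.ord)
    (hA : ∀ γ ≤ β, Cardinal.mk ↥((A γ).1 ∪ (A γ).2) < x.lam) :
    Dd x sStar A β < x.lam.ord := by
  refine max_lt (gammaStar_lt x hreg hucard sStar) ?_
  refine sSup_lt_ord hreg _ ?_ ?_
  · refine Cardinal.mk_image_le.trans_lt ?_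
    have h2 : (Set.Iic β : Set Ordinal.{0}) = Set.Iio (Order.succ β) := (Order.Iio_succ β).symm
    rw [h2, Ordinal.mk_Iio_ordinal]
    refine Cardinal.lift_lt.mpr ?_
    rw [← Cardinal.lt_ord]
    exact (Cardinal.isSuccLimit_ord hreg.aleph0_le).succ_lt hβ
  · rintro _ ⟨γ, hγ, rfl⟩
    exact eA_lt x A hreg hucard (hA γ hγ)

lemma gammaStar_le_Dd (β : Ordinal.{0}) : x.gammaStar sStar ≤ Dd x sStar A β :=
  le_max_left _ _

lemma Dd_mono (hreg : x.lam.IsRegular)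
    (hucard : ∀ s : x.I, Cardinal.mk ↥(x.u s) < Cardinal.lift.{1} x.lam)
    {β₁ β₂ β : Ordinal.{0}} (h12 : β₁ ≤ β₂) (h2 : β₂ ≤ β)
    (hA : ∀ γ ≤ β, Cardinal.mk ↥((A γ).1 ∪ (A γ).2) < x.lam) :
    Dd x sStar A β₁ ≤ Dd x sStar A β₂ := by
  refine sup_le_sup_left ?_ _
  refine csSup_le_csSup ?_ ⟨eA x A β₁, Set.mem_image_of_mem _ (Set.mem_Iic.mpr le_rfl)⟩
    (Set.image_mono (Set.Iic_subset_Iic.mpr h12))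
  exact bddAbove_eA x A hreg hucard (fun γ hγ => hA γ (hγ.trans h2))

lemma mem_Ipr_of_mem (hreg : x.lam.IsRegular)
    (hucard : ∀ s : x.I, Cardinal.mk ↥(x.u s) < Cardinal.lift.{1} x.lam)
    {β : Ordinal.{0}} (hA : ∀ γ ≤ β, Cardinal.mk ↥((A γ).1 ∪ (A γ).2) < x.lam)
    {m : x.M} (hm : m ∈ (A β).1 ∪ (A β).2) : m.1 ∈ Ipr x sStar A β := by
  intro γ hγ
  refine (lt_gammaStar x hγ).trans_le ?_
  have h1 : x.gammaStar m.1 ≤ eA x A β := by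
    refine le_csSup ?_ ⟨m, hm, rfl⟩
    refine ⟨x.lam.ord, ?_⟩
    rintro _ ⟨m', _, rfl⟩
    exact (gammaStar_lt x hreg hucard m'.1).le
  refine h1.trans (le_trans ?_ (le_max_right _ _))
  exact le_csSup (bddAbove_eA x A hreg hucard hA) ⟨β, Set.mem_Iic.mpr le_rfl, rfl⟩

lemma sStar_mem_Ipr (β : Ordinal.{0}) : sStar ∈ Ipr x sStar A β :=
  fun γ hγ => (lt_gammaStar x hγ).trans_le (gammaStar_le_Dd x sStar A β)

lemma gg_zero {β γ : Ordinal.{0}} (hγ : γ < x.gammaStar sStar) : gg x sStar A β γ = 0 := by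
  rw [gg]; exact if_pos hγ

lemma gg_pos {β γ : Ordinal.{0}} (hγ : x.gammaStar sStar ≤ γ) : 0 < gg x sStar A β γ := by
  rw [gg, if_neg (not_lt.mpr hγ)]
  exact lt_of_lt_of_le zero_lt_one le_self_add

lemma gg_le (β γ : Ordinal.{0}) : gg x sStar A β γ ≤ 1 + β := by
  rw [gg]
  split_ifs with h
  · exact zero_le
  · refine (add_le_add_iff_left (1 : Ordinal.{0})).2 ?_
    refine csInf_le (OrderBot.bddBelow _) ?_
    exact Or.inl rfl

lemma gg_mono {β γ₁ γ₂ : Ordinal.{0}} (h : γ₁ ≤ γ₂) :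
    gg x sStar A β γ₁ ≤ gg x sStar A β γ₂ := by
  rw [gg, gg]
  split_ifs with h1 h2 h2
  · exact le_rfl
  · exact zero_le
  · exact absurd (h.trans_lt h2) h1
  · refine (add_le_add_iff_left 1).2 (csInf_le_csInf (OrderBot.bddBelow _) ⟨β, Or.inl rfl⟩ ?_)
    rintro δ (h' | ⟨h1', h2'⟩)
    · exact Or.inl h'
    · exact Or.inr ⟨h1', h.trans_lt h2'⟩

lemma gg_agree (hreg : x.lam.IsRegular)
    (hucard : ∀ s : x.I, Cardinal.mk ↥(x.u s) < Cardinal.lift.{1} x.lam)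
    {β' β γ : Ordinal.{0}} (hβ'β : β' ≤ β)
    (hA : ∀ γ ≤ β, Cardinal.mk ↥((A γ).1 ∪ (A γ).2) < x.lam)
    (hγ : γ < Dd x sStar A β') :
    gg x sStar A β' γ = gg x sStar A β γ := by
  rw [gg, gg]
  by_cases hgs : γ < x.gammaStar sStar
  · rw [if_pos hgs, if_pos hgs]
  · rw [if_neg hgs, if_neg hgs]
    congr 1
    have hPne : {δ | δ ≤ β' ∧ γ < Dd x sStar A δ}.Nonempty := ⟨β', le_rfl, hγ⟩
    have hδ₀ := csInf_mem hPne
    set δ₀ := sInf {δ | δ ≤ β' ∧ γ < Dd x sStar A δ} with hδ₀def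
    have claim1 : sInf {δ | δ = β' ∨ (δ ≤ β' ∧ γ < Dd x sStar A δ)} = δ₀ := by
      refine le_antisymm (csInf_le (OrderBot.bddBelow _) (Or.inr hδ₀)) ?_
      refine le_csInf ⟨β', Or.inl rfl⟩ ?_
      rintro δ (rfl | hδ)
      · exact hδ₀.1
      · exact csInf_le (OrderBot.bddBelow _) hδ
    have claim2 : sInf {δ | δ = β ∨ (δ ≤ β ∧ γ < Dd x sStar A δ)} = δ₀ := by
      refine le_antisymm (csInf_le (OrderBot.bddBelow _)
        (Or.inr ⟨hδ₀.1.trans hβ'β, hδ₀.2⟩)) ?_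
      refine le_csInf ⟨β, Or.inl rfl⟩ ?_
      rintro δ (rfl | hδ)
      · exact hδ₀.1.trans hβ'β
      · rcases le_or_gt δ β' with h' | h'
        · exact csInf_le (OrderBot.bddBelow _) ⟨h', hδ.2⟩
        · exact hδ₀.1.trans h'.le
    rw [claim1, claim2]

lemma gg_big (hreg : x.lam.IsRegular)
    (hucard : ∀ s : x.I, Cardinal.mk ↥(x.u s) < Cardinal.lift.{1} x.lam)
    {β' β ζ γ : Ordinal.{0}} (hβ'β : β' < β)
    (hA : ∀ γ ≤ β, Cardinal.mk ↥((A γ).1 ∪ (A γ).2) < x.lam)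
    (hζ : Dd x sStar A β' ≤ ζ) (hγ : γ < Dd x sStar A β') :
    gg x sStar A β' γ < gg x sStar A β ζ := by
  have h1 : gg x sStar A β' γ ≤ 1 + β' := gg_le x sStar A β' γ
  have hzgs : ¬ ζ < x.gammaStar sStar :=
    not_lt.mpr ((gammaStar_le_Dd x sStar A β').trans hζ)
  have hrw : gg x sStar A β ζ = 1 + sInf {δ | δ = β ∨ (δ ≤ β ∧ ζ < Dd x sStar A δ)} := by
    rw [gg]
    exact if_neg hzgs
  rw [hrw]
  have hne : {δ | δ = β ∨ (δ ≤ β ∧ ζ < Dd x sStar A δ)}.Nonempty := ⟨β, Or.inl rfl⟩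
  have hmem := csInf_mem hne
  have hgt : β' < sInf {δ | δ = β ∨ (δ ≤ β ∧ ζ < Dd x sStar A δ)} := by
    rcases hmem with h | ⟨h1', h2'⟩
    · rw [h]; exact hβ'β
    · by_contra hle
      push_neg at hle
      have := (Dd_mono x sStar A hreg hucard hle (hβ'β.le) hA).trans hζ
      exact absurd h2' (not_lt.mpr this)
  calc gg x sStar A β' γ ≤ 1 + β' := h1
    _ < 1 + sInf {δ | δ = β ∨ (δ ≤ β ∧ ζ < Dd x sStar A δ)} :=
      (add_lt_add_iff_left 1).2 hgt

lemma hh_agree (hreg : x.lam.IsRegular)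
    (hucard : ∀ s : x.I, Cardinal.mk ↥(x.u s) < Cardinal.lift.{1} x.lam)
    {β' β γ : Ordinal.{0}} (hβ'β : β' ≤ β)
    (hA : ∀ γ ≤ β, Cardinal.mk ↥((A γ).1 ∪ (A γ).2) < x.lam)
    (hγ : γ < Dd x sStar A β') :
    hh (gg x sStar A β') (Dd x sStar A β') γ = hh (gg x sStar A β) (Dd x sStar A β) γ := by
  rcases eq_or_lt_of_le hβ'β with rfl | hlt
  · rfl
  have hbb : Dd x sStar A β' ≤ Dd x sStar A β :=
    Dd_mono x sStar A hreg hucard hβ'β le_rfl hA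
  have hv : gg x sStar A β γ = gg x sStar A β' γ :=
    (gg_agree x sStar A hreg hucard hβ'β hA hγ).symm
  have hne' : {ζ | ζ ≤ Dd x sStar A β' ∧ (ζ = Dd x sStar A β' ∨
      gg x sStar A β' γ < gg x sStar A β' ζ)}.Nonempty := ⟨Dd x sStar A β', le_rfl, Or.inl rfl⟩
  have hm' := csInf_mem hne'
  set m' := sInf {ζ | ζ ≤ Dd x sStar A β' ∧ (ζ = Dd x sStar A β' ∨
      gg x sStar A β' γ < gg x sStar A β' ζ)} with hm'def
  have hmemT : m' ∈ {ζ | ζ ≤ Dd x sStar A β ∧ (ζ = Dd x sStar A β ∨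
      gg x sStar A β γ < gg x sStar A β ζ)} := by
    refine ⟨hm'.1.trans hbb, ?_⟩
    rcases eq_or_lt_of_le hm'.1 with heq | hltm
    · rcases eq_or_lt_of_le hbb with heq2 | hlt2
      · exact Or.inl (heq.trans heq2)
      · refine Or.inr ?_
        rw [hv, heq]
        exact gg_big x sStar A hreg hucard hlt hA le_rfl hγ
    · refine Or.inr ?_
      rw [hv, ← gg_agree x sStar A hreg hucard hβ'β hA hltm]
      rcases hm'.2 with heq | hgt
      · exact absurd heq hltm.ne
      · exact hgt
  have hlow : ∀ ζ ∈ {ζ | ζ ≤ Dd x sStar A β ∧ (ζ = Dd x sStar A β ∨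
      gg x sStar A β γ < gg x sStar A β ζ)}, m' ≤ ζ := by
    intro ζ hζmem
    by_contra hζ
    push_neg at hζ
    have hζb' : ζ < Dd x sStar A β' := hζ.trans_le hm'.1
    rcases hζmem.2 with heq | hgg
    · exact absurd heq (hζb'.trans_le hbb).ne
    · rw [hv, ← gg_agree x sStar A hreg hucard hβ'β hA hζb'] at hgg
      have : ζ ∈ {ζ | ζ ≤ Dd x sStar A β' ∧ (ζ = Dd x sStar A β' ∨
          gg x sStar A β' γ < gg x sStar A β' ζ)} := ⟨hζb'.le, Or.inr hgg⟩
      exact absurd (csInf_le (OrderBot.bddBelow _) this) (not_le.mpr hζ)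
  rw [hh, hh]
  refine le_antisymm ?_ ?_
  · exact le_csInf ⟨Dd x sStar A β, le_rfl, Or.inl rfl⟩ hlow
  · exact csInf_le (OrderBot.bddBelow _) hmemT

lemma hh_star {β γ : Ordinal.{0}} (hγ : γ < x.gammaStar sStar) :
    hh (gg x sStar A β) (Dd x sStar A β) γ = x.gammaStar sStar := by
  rw [hh]
  refine le_antisymm ?_ ?_
  · refine csInf_le (OrderBot.bddBelow _) ⟨gammaStar_le_Dd x sStar A β, ?_⟩
    rcases eq_or_lt_of_le (gammaStar_le_Dd x sStar A β) with heq | hlt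
    · exact Or.inl heq
    · refine Or.inr ?_
      rw [gg_zero x sStar A hγ]
      exact gg_pos x sStar A le_rfl
  · refine le_csInf ⟨Dd x sStar A β, le_rfl, Or.inl rfl⟩ ?_
    intro ζ hζ
    by_contra hzgs
    push_neg at hzgs
    rcases hζ.2 with heq | hgt
    · rw [heq] at hzgs
      exact absurd (gammaStar_le_Dd x sStar A β) (not_le.mpr hzgs)
    · rw [gg_zero x sStar A hγ, gg_zero x sStar A hzgs] at hgt
      exact lt_irrefl 0 hgt

end Facts

section FcFacts

variable (x : FullParam) (I' : Set x.I) (c : ∀ s : x.I, x.G s)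

lemma fc_fst (m : x.M) : (x.fc I' c m).1 = m.1 := by
  rw [FullParam.fc]
  split_ifs <;> rfl

lemma fc_mem {m : x.M} (hm : m.1 ∈ I') :
    x.fc I' c m = ⟨m.1, m.2 * c m.1⟩ := by
  rw [FullParam.fc, if_pos hm]

lemma fc_inj {m₁ m₂ : x.M} (h₁ : m₁.1 ∈ I') (h₂ : m₂.1 ∈ I')
    (h : x.fc I' c m₁ = x.fc I' c m₂) : m₁ = m₂ := by
  obtain ⟨s₁, y₁⟩ := m₁
  obtain ⟨s₂, y₂⟩ := m₂
  have e₁ : x.fc I' c ⟨s₁, y₁⟩ = ⟨s₁, y₁ * c s₁⟩ := fc_mem x I' c h₁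
  have e₂ : x.fc I' c ⟨s₂, y₂⟩ = ⟨s₂, y₂ * c s₂⟩ := fc_mem x I' c h₂
  rw [e₁, e₂] at h
  obtain ⟨rfl, h2⟩ := Sigma.mk.inj_iff.mp h
  rw [mul_right_cancel (eq_of_heq h2)]

lemma fc_F (s : x.I) (a : x.G s) {m : x.M} (hm : m.1 ∈ I') :
    x.fc I' c (x.F s a m) = x.F s a (x.fc I' c m) := by
  obtain ⟨s₀, y⟩ := m
  have hm' : s₀ ∈ I' := hm
  by_cases h : s₀ = s
  · subst h
    have hF : x.F s₀ a ⟨s₀, y⟩ = ⟨s₀, a * y⟩ := by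
      rw [FullParam.F, dif_pos rfl]
      rfl
    have hfc1 : x.fc I' c ⟨s₀, y⟩ = ⟨s₀, y * c s₀⟩ := fc_mem x I' c hm'
    have hfc2 : x.fc I' c ⟨s₀, a * y⟩ = ⟨s₀, a * y * c s₀⟩ := fc_mem x I' c hm'
    have hF2 : x.F s₀ a ⟨s₀, y * c s₀⟩ = ⟨s₀, a * (y * c s₀)⟩ := by
      rw [FullParam.F, dif_pos rfl]
      rfl
    rw [hF, hfc1, hfc2, hF2, mul_assoc]
  · have hF : x.F s a ⟨s₀, y⟩ = ⟨s₀, y⟩ := by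
      rw [FullParam.F]
      exact dif_neg h
    rw [hF]
    have h2 : (x.fc I' c ⟨s₀, y⟩).1 = s₀ := fc_fst x I' c _
    have hF2 : x.F s a (x.fc I' c ⟨s₀, y⟩) = x.fc I' c ⟨s₀, y⟩ := by
      rw [FullParam.F]
      exact dif_neg (by rw [h2]; exact h)
    rw [hF2]

lemma fc_Q (hpair : ∀ s₁ s₂ : x.I, s₁ ∈ I' → s₂ ∈ I' → (s₁, s₂) ∈ x.S →
      (c s₁, c s₂) ∈ x.Gpair s₁ s₂)
    {m₁ m₂ : x.M} (h₁ : m₁.1 ∈ I') (h₂ : m₂.1 ∈ I') :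
    (m₁, m₂) ∈ x.Q ↔ (x.fc I' c m₁, x.fc I' c m₂) ∈ x.Q := by
  obtain ⟨s₁, y₁⟩ := m₁
  obtain ⟨s₂, y₂⟩ := m₂
  have e₁ : x.fc I' c ⟨s₁, y₁⟩ = ⟨s₁, y₁ * c s₁⟩ := fc_mem x I' c h₁
  have e₂ : x.fc I' c ⟨s₂, y₂⟩ = ⟨s₂, y₂ * c s₂⟩ := fc_mem x I' c h₂
  rw [e₁, e₂]
  show ((s₁, s₂) ∈ x.S ∧ (y₁, y₂) ∈ x.Gpair s₁ s₂) ↔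
    ((s₁, s₂) ∈ x.S ∧ (y₁ * c s₁, y₂ * c s₂) ∈ x.Gpair s₁ s₂)
  have hmul : (y₁ * c s₁, y₂ * c s₂) = (y₁, y₂) * (c s₁, c s₂) := rfl
  constructor
  · rintro ⟨hS, hG⟩
    refine ⟨hS, ?_⟩
    rw [hmul]
    exact mul_mem hG (hpair _ _ h₁ h₂ hS)
  · rintro ⟨hS, hG⟩
    refine ⟨hS, ?_⟩
    rw [hmul] at hG
    exact (mul_mem_cancel_right (hpair _ _ h₁ h₂ hS)).mp hG

end FcFacts

section CFacts

variable (x : FullParam) (sStar : x.I) (A : Ordinal.{0} → Set x.M × Set x.M)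

lemma one_add_lt {α β : Ordinal.{0}} (hω : Ordinal.omega0 ≤ α) (hβα : β < α) : 1 + β < α := by
  rw [← Ordinal.one_add_of_omega0_le hω]
  exact (add_lt_add_iff_left 1).2 hβα

lemma wellDef_Ipr {α : Ordinal.{0}}
    (hWD : ∀ (s : x.I) (G : x.GFun), (∀ γ ∈ x.u s, γ < G.beta) → x.wellDef s G.g G.h)
    (hα : α < x.alphaStar) (hω : Ordinal.omega0 ≤ α) {β : Ordinal.{0}} (hβα : β < α)
    (hD : Dd x sStar A β < x.lam.ord) {s : x.I} (hs : s ∈ Ipr x sStar A β) :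
    x.wellDef s (gg x sStar A β) (hh (gg x sStar A β) (Dd x sStar A β)) := by
  have h1β : 1 + β < α := one_add_lt hω hβα
  exact hWD s ⟨α, Dd x sStar A β, hα, hD, gg x sStar A β,
    fun γ _ => (gg_le x sStar A β γ).trans_lt h1β,
    fun γ₁ γ₂ h _ => gg_mono x sStar A h⟩ (fun γ hγ => hs γ hγ)

lemma ccg_spec {s : x.I} {g : Ordinal.{0} → Ordinal.{0}} {b : Ordinal.{0}}
    (hw : x.wellDef s g (hh g b)) :
    ccg x g b s = FreeGroup.of ⟨hw.choose, hw.choose_spec.1⟩ := dif_pos hw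

lemma ccg_agree (hreg : x.lam.IsRegular)
    (hucard : ∀ s : x.I, Cardinal.mk ↥(x.u s) < Cardinal.lift.{1} x.lam)
    {α : Ordinal.{0}}
    (hWD : ∀ (s : x.I) (G : x.GFun), (∀ γ ∈ x.u s, γ < G.beta) → x.wellDef s G.g G.h)
    (hα : α < x.alphaStar) (hω : Ordinal.omega0 ≤ α) {β' β : Ordinal.{0}}
    (hβ'β : β' ≤ β) (hβα : β < α)
    (hA : ∀ γ ≤ β, Cardinal.mk ↥((A γ).1 ∪ (A γ).2) < x.lam)
    (hD' : Dd x sStar A β' < x.lam.ord) (hD : Dd x sStar A β < x.lam.ord)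
    {s : x.I} (hs : s ∈ Ipr x sStar A β') :
    ccg x (gg x sStar A β') (Dd x sStar A β') s
      = ccg x (gg x sStar A β) (Dd x sStar A β) s := by
  have hsβ : s ∈ Ipr x sStar A β :=
    fun γ hγ => (hs γ hγ).trans_le (Dd_mono x sStar A hreg hucard hβ'β le_rfl hA)
  have hw' := wellDef_Ipr x sStar A hWD hα hω (hβ'β.trans_lt hβα) hD' hs
  have hw := wellDef_Ipr x sStar A hWD hα hω hβα hD hsβ
  rw [ccg_spec x hw', ccg_spec x hw]
  congr 1
  refine Subtype.ext ?_
  refine x.uniq _ _ (by rw [hw'.choose_spec.1, hw.choose_spec.1]) ?_ ?_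
  · intro γ hγ
    rw [hw'.choose_spec.1] at hγ
    rw [hw'.choose_spec.2.1 γ hγ, hw.choose_spec.2.1 γ hγ]
    exact gg_agree x sStar A hreg hucard hβ'β hA (hs γ hγ)
  · intro γ hγ
    rw [hw'.choose_spec.1] at hγ
    rw [hw'.choose_spec.2.2 γ hγ, hw.choose_spec.2.2 γ hγ]
    exact hh_agree x sStar A hreg hucard hβ'β hA (hs γ hγ)

lemma ccg_star {tStar : x.J} (hts : x.st tStar = sStar)
    {α : Ordinal.{0}}
    (hWD : ∀ (s : x.I) (G : x.GFun), (∀ γ ∈ x.u s, γ < G.beta) → x.wellDef s G.g G.h)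
    (hα : α < x.alphaStar) (hω : Ordinal.omega0 ≤ α) {β : Ordinal.{0}} (hβα : β < α)
    (hD : Dd x sStar A β < x.lam.ord)
    (hgt0 : ∀ γ ∈ x.u sStar, x.gt tStar γ = 0)
    (hht0 : ∀ γ ∈ x.u sStar, x.ht tStar γ = x.gammaStar sStar) :
    ccg x (gg x sStar A β) (Dd x sStar A β) sStar = FreeGroup.of ⟨tStar, hts⟩ := by
  have hw := wellDef_Ipr x sStar A hWD hα hω hβα hD (sStar_mem_Ipr x sStar A β)
  rw [ccg_spec x hw]
  congr 1
  refine Subtype.ext ?_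
  refine x.uniq _ _ (by rw [hw.choose_spec.1, hts]) ?_ ?_
  · intro γ hγ
    rw [hw.choose_spec.1] at hγ
    rw [hw.choose_spec.2.1 γ hγ, hgt0 γ hγ]
    exact gg_zero x sStar A (lt_gammaStar x hγ)
  · intro γ hγ
    rw [hw.choose_spec.1] at hγ
    rw [hw.choose_spec.2.2 γ hγ, hht0 γ hγ]
    exact hh_star x sStar A (lt_gammaStar x hγ)

lemma ccg_pair {α : Ordinal.{0}}
    (hWD : ∀ (s : x.I) (G : x.GFun), (∀ γ ∈ x.u s, γ < G.beta) → x.wellDef s G.g G.h)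
    (hT : ∀ t₁ t₂ : x.J, (x.st t₁, x.st t₂) ∈ x.S →
      (∃ G : x.GFun,
        (∀ γ ∈ x.u (x.st t₁), γ < G.beta ∧ x.gt t₁ γ = G.g γ ∧ x.ht t₁ γ = G.h γ) ∧
        (∀ γ ∈ x.u (x.st t₂), γ < G.beta ∧ x.gt t₂ γ = G.g γ ∧ x.ht t₂ γ = G.h γ)) →
      (t₁, t₂) ∈ x.T)
    (hα : α < x.alphaStar) (hω : Ordinal.omega0 ≤ α) {β : Ordinal.{0}} (hβα : β < α)
    (hD : Dd x sStar A β < x.lam.ord)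
    {s₁ s₂ : x.I} (hs₁ : s₁ ∈ Ipr x sStar A β) (hs₂ : s₂ ∈ Ipr x sStar A β)
    (hS : (s₁, s₂) ∈ x.S) :
    (ccg x (gg x sStar A β) (Dd x sStar A β) s₁,
      ccg x (gg x sStar A β) (Dd x sStar A β) s₂) ∈ x.Gpair s₁ s₂ := by
  have h1β : 1 + β < α := one_add_lt hω hβα
  have hw₁ := wellDef_Ipr x sStar A hWD hα hω hβα hD hs₁
  have hw₂ := wellDef_Ipr x sStar A hWD hα hω hβα hD hs₂
  rw [ccg_spec x hw₁, ccg_spec x hw₂]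
  have hT' : (hw₁.choose, hw₂.choose) ∈ x.T := by
    refine hT _ _ (by rw [hw₁.choose_spec.1, hw₂.choose_spec.1]; exact hS) ?_
    refine ⟨⟨α, Dd x sStar A β, hα, hD, gg x sStar A β,
      fun γ _ => (gg_le x sStar A β γ).trans_lt h1β,
      fun γ₁ γ₂ h _ => gg_mono x sStar A h⟩, ?_, ?_⟩
    · intro γ hγ
      rw [hw₁.choose_spec.1] at hγ
      exact ⟨hs₁ γ hγ, hw₁.choose_spec.2.1 γ hγ, hw₁.choose_spec.2.2 γ hγ⟩
    · intro γ hγ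
      rw [hw₂.choose_spec.1] at hγ
      exact ⟨hs₂ γ hγ, hw₂.choose_spec.2.1 γ hγ, hw₂.choose_spec.2.2 γ hγ⟩
  exact Subgroup.subset_closure
    ⟨hw₁.choose, hw₂.choose, hw₁.choose_spec.1, hw₂.choose_spec.1, hT', rfl⟩

end CFacts

section FOL

lemma F_fst (x : FullParam) (s : x.I) (a : x.G s) (m : x.M) : (x.F s a m).1 = m.1 := by
  rw [FullParam.F]
  split_ifs with h
  · exact h.symm
  · rfl

/-- The language of `M_𝔵` with one added constant. -/
abbrev Lc (x : FullParam) : FirstOrder.Language.{0, 0} :=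
  x.lang.sum (FirstOrder.Language.constantsOn Unit)

/-- The expansion of `M_𝔵` interpreting the constant as `(s⋆, 1)`. -/
noncomputable def S1 (x : FullParam) (sStar : x.I) : (Lc x).Structure x.M :=
  @FirstOrder.Language.sumStructure x.lang (FirstOrder.Language.constantsOn Unit) x.M
    x.strM (FirstOrder.Language.constantsOn.structure fun _ => (⟨sStar, 1⟩ : x.M))

/-- The expansion of `M_𝔵` interpreting the constant as `(s⋆, x_{t⋆})`. -/
noncomputable def S2 (x : FullParam) (sStar : x.I) (tStar : x.J)
    (hts : x.st tStar = sStar) : (Lc x).Structure x.M :=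
  @FirstOrder.Language.sumStructure x.lang (FirstOrder.Language.constantsOn Unit) x.M
    x.strM (FirstOrder.Language.constantsOn.structure
      fun _ => (⟨sStar, FreeGroup.of ⟨tStar, hts⟩⟩ : x.M))

section Helpers

variable (x : FullParam) (sStar : x.I) (tStar : x.J) (hts : x.st tStar = sStar)

lemma s1funMap1 (f : x.lang.Functions 1) (v : Fin 1 → x.M) :
    @FirstOrder.Language.Structure.funMap _ _ (S1 x sStar) 1 (Sum.inl f) v
      = x.F f.1 f.2 (v 0) := rfl

lemma s2funMap1 (f : x.lang.Functions 1) (v : Fin 1 → x.M) :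
    @FirstOrder.Language.Structure.funMap _ _ (S2 x sStar tStar hts) 1 (Sum.inl f) v
      = x.F f.1 f.2 (v 0) := rfl

lemma s1funMapC (f : (FirstOrder.Language.constantsOn Unit).Functions 0) (v : Fin 0 → x.M) :
    @FirstOrder.Language.Structure.funMap _ _ (S1 x sStar) 0 (Sum.inr f) v
      = ⟨sStar, (1 : x.G sStar)⟩ := rfl

lemma s2funMapC (f : (FirstOrder.Language.constantsOn Unit).Functions 0) (v : Fin 0 → x.M) :
    @FirstOrder.Language.Structure.funMap _ _ (S2 x sStar tStar hts) 0 (Sum.inr f) v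
      = ⟨sStar, FreeGroup.of ⟨tStar, hts⟩⟩ := rfl

end Helpers

variable (x : FullParam) (sStar : x.I) (tStar : x.J) (hts : x.st tStar = sStar)

lemma term_key (I' : Set x.I) (c : ∀ s : x.I, x.G s)
    (hIs : sStar ∈ I') (hcs : c sStar = FreeGroup.of ⟨tStar, hts⟩)
    {n : ℕ} (v₁ v₂ : Empty ⊕ Fin n → x.M)
    (hv : ∀ k, (v₁ k).1 ∈ I' ∧ v₂ k = x.fc I' c (v₁ k))
    (t : (Lc x).Term (Empty ⊕ Fin n)) :
    (@FirstOrder.Language.Term.realize _ x.M (S1 x sStar) _ v₁ t).1 ∈ I' ∧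
    @FirstOrder.Language.Term.realize _ x.M (S2 x sStar tStar hts) _ v₂ t
      = x.fc I' c (@FirstOrder.Language.Term.realize _ x.M (S1 x sStar) _ v₁ t) := by
  induction t with
  | var k => exact hv k
  | func f ts ih =>
    rename_i l
    rcases f with f | f
    · match l, f, ts, ih with
      | 1, f, ts, ih =>
        obtain ⟨h0, e0⟩ := ih 0
        rw [@FirstOrder.Language.Term.realize_func _ _ (S1 x sStar) _ v₁ _ (Sum.inl f) ts,
          @FirstOrder.Language.Term.realize_func _ _ (S2 x sStar tStar hts) _ v₂ _ (Sum.inl f) ts,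
          s1funMap1 x sStar f, s2funMap1 x sStar tStar hts f]
        constructor
        · rw [F_fst]
          exact h0
        · rw [e0]
          exact (fc_F x I' c f.1 f.2 h0).symm
    · match l, f, ts with
      | 0, f, ts =>
        rw [@FirstOrder.Language.Term.realize_func _ _ (S1 x sStar) _ v₁ _ (Sum.inr f) ts,
          @FirstOrder.Language.Term.realize_func _ _ (S2 x sStar tStar hts) _ v₂ _ (Sum.inr f) ts,
          s1funMapC x sStar f, s2funMapC x sStar tStar hts f]
        refine ⟨hIs, ?_⟩
        rw [fc_mem x I' c hIs]
        dsimp only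
        rw [one_mul, hcs]


lemma graph_isPartialIso (I' : Set x.I) (c : ∀ s : x.I, x.G s)
    (hIs : sStar ∈ I') (hcs : c sStar = FreeGroup.of ⟨tStar, hts⟩)
    (hpair : ∀ s₁ s₂ : x.I, s₁ ∈ I' → s₂ ∈ I' → (s₁, s₂) ∈ x.S →
      (c s₁, c s₂) ∈ x.Gpair s₁ s₂) :
    @EFGame.IsPartialIso (Lc x) x.M x.M (S1 x sStar) (S2 x sStar tStar hts)
      (grphg x I' c) := by
  constructor
  · rintro ⟨m₁, m₁'⟩ ⟨hm₁, e₁⟩ ⟨m₂, m₂'⟩ ⟨hm₂, e₂⟩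
    dsimp only at hm₁ e₁ hm₂ e₂ ⊢
    subst e₁
    subst e₂
    constructor
    · intro h
      rw [h]
    · intro h
      exact fc_inj x I' c hm₁ hm₂ h
  · intro n φ hφ xs hxs
    have hv : ∀ k : Empty ⊕ Fin n,
        ((Sum.elim (fun e : Empty => e.elim) (fun i => (xs i).1) k : x.M)).1 ∈ I' ∧
        Sum.elim (fun e : Empty => e.elim) (fun i => (xs i).2) k
          = x.fc I' c (Sum.elim (fun e : Empty => e.elim) (fun i => (xs i).1) k) := by
      rintro (e | i)
      · exact e.elim
      · exact ⟨(hxs i).1, (hxs i).2⟩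
    cases hφ with
    | equal t₁ t₂ =>
      obtain ⟨h1, e1⟩ := term_key x sStar tStar hts I' c hIs hcs _ _ hv t₁
      obtain ⟨h2, e2⟩ := term_key x sStar tStar hts I' c hIs hcs _ _ hv t₂
      show (@FirstOrder.Language.Term.realize _ x.M (S1 x sStar) _
            (Sum.elim (fun e => e.elim) fun i => (xs i).1) t₁
          = @FirstOrder.Language.Term.realize _ x.M (S1 x sStar) _
            (Sum.elim (fun e => e.elim) fun i => (xs i).1) t₂)
        ↔ (@FirstOrder.Language.Term.realize _ x.M (S2 x sStar tStar hts) _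
            (Sum.elim (fun e => e.elim) fun i => (xs i).2) t₁
          = @FirstOrder.Language.Term.realize _ x.M (S2 x sStar tStar hts) _
            (Sum.elim (fun e => e.elim) fun i => (xs i).2) t₂)
      rw [e1, e2]
      constructor
      · intro h
        rw [h]
      · intro h
        exact fc_inj x I' c h1 h2 h
    | rel R ts =>
      rename_i l
      rcases R with r | r
      · match l, r, ts with
        | 1, r, ts =>
          obtain ⟨h0, e0⟩ := term_key x sStar tStar hts I' c hIs hcs _ _ hv (ts 0)
          show ((@FirstOrder.Language.Term.realize _ x.M (S1 x sStar) _
                (Sum.elim (fun e => e.elim) fun i => (xs i).1) (ts 0)).1 = r)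
            ↔ ((@FirstOrder.Language.Term.realize _ x.M (S2 x sStar tStar hts) _
                (Sum.elim (fun e => e.elim) fun i => (xs i).2) (ts 0)).1 = r)
          rw [e0, fc_fst x I' c]
        | 2, r, ts =>
          obtain ⟨h0, e0⟩ := term_key x sStar tStar hts I' c hIs hcs _ _ hv (ts 0)
          obtain ⟨h1, e1⟩ := term_key x sStar tStar hts I' c hIs hcs _ _ hv (ts 1)
          show ((@FirstOrder.Language.Term.realize _ x.M (S1 x sStar) _
                (Sum.elim (fun e => e.elim) fun i => (xs i).1) (ts 0)).1 = r.val.1 ∧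
              (@FirstOrder.Language.Term.realize _ x.M (S1 x sStar) _
                (Sum.elim (fun e => e.elim) fun i => (xs i).1) (ts 1)).1 = r.val.2 ∧
              (@FirstOrder.Language.Term.realize _ x.M (S1 x sStar) _
                (Sum.elim (fun e => e.elim) fun i => (xs i).1) (ts 0),
               @FirstOrder.Language.Term.realize _ x.M (S1 x sStar) _
                (Sum.elim (fun e => e.elim) fun i => (xs i).1) (ts 1)) ∈ x.Q)
            ↔ ((@FirstOrder.Language.Term.realize _ x.M (S2 x sStar tStar hts) _
                (Sum.elim (fun e => e.elim) fun i => (xs i).2) (ts 0)).1 = r.val.1 ∧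
              (@FirstOrder.Language.Term.realize _ x.M (S2 x sStar tStar hts) _
                (Sum.elim (fun e => e.elim) fun i => (xs i).2) (ts 1)).1 = r.val.2 ∧
              (@FirstOrder.Language.Term.realize _ x.M (S2 x sStar tStar hts) _
                (Sum.elim (fun e => e.elim) fun i => (xs i).2) (ts 0),
               @FirstOrder.Language.Term.realize _ x.M (S2 x sStar tStar hts) _
                (Sum.elim (fun e => e.elim) fun i => (xs i).2) (ts 1)) ∈ x.Q)
          rw [e0, e1, fc_fst x I' c, fc_fst x I' c]
          exact and_congr_right fun _ => and_congr_right fun _ =>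
            fc_Q x I' c hpair h0 h1
      · exact r.elim

end FOL

end Shelah836

/-- Claim 1.7(2): if `𝔵` is a full `λ`-parameter, `s(*) ∈ I_𝔵`, `t* ∈ J_{s(*)}`,
`ω ≤ α < α*_𝔵` and condition `⊛_{2,α}(s(*), t*)` holds, then the expansions
`(M_𝔵, (s(*), e))` and `(M_𝔵, (s(*), x_{t*}))` are `EF_{α,λ}`-equivalent. -/
theorem statement8 (x : FullParam) (sStar : x.I) (tStar : x.J) (hts : x.st tStar = sStar)
    (α : Ordinal.{0}) (hω : Ordinal.omega0 ≤ α) (hα : α < x.alphaStar)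
    (hstar : x.Star2 sStar tStar) :
    EFGame.EFEquivC x.lang x.M x.M
      ⟨sStar, (1 : x.G sStar)⟩ ⟨sStar, FreeGroup.of ⟨tStar, hts⟩⟩ α x.lam := by
  obtain ⟨⟨hreg, hucard⟩, hWD, hT, htss, hgt0, hht0⟩ := hstar
  show @EFGame.WinIso (Shelah836.Lc x) x.M x.M (Shelah836.S1 x sStar)
    (Shelah836.S2 x sStar tStar hts) ∅ α x.lam
  refine ⟨fun β A => Shelah836.grphg x (Shelah836.Ipr x sStar A β)
      (Shelah836.ccg x (Shelah836.gg x sStar A β) (Shelah836.Dd x sStar A β)), ?_, ?_⟩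
  · intro β A A' hAA
    have hDd : ∀ δ ≤ β, Shelah836.Dd x sStar A δ = Shelah836.Dd x sStar A' δ := by
      intro δ hδ
      rw [Shelah836.Dd, Shelah836.Dd]
      congr 2
      refine Set.image_congr ?_
      intro γ hγ
      rw [Shelah836.eA, Shelah836.eA, hAA γ ((Set.mem_Iic.mp hγ).trans hδ)]
    have hgg : Shelah836.gg x sStar A β = Shelah836.gg x sStar A' β := by
      funext γ
      rw [Shelah836.gg, Shelah836.gg]
      have hset : {δ | δ = β ∨ (δ ≤ β ∧ γ < Shelah836.Dd x sStar A δ)}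
          = {δ | δ = β ∨ (δ ≤ β ∧ γ < Shelah836.Dd x sStar A' δ)} := by
        ext δ
        constructor
        · rintro (rfl | ⟨h1, h2⟩)
          · exact Or.inl rfl
          · rw [hDd δ h1] at h2
            exact Or.inr ⟨h1, h2⟩
        · rintro (rfl | ⟨h1, h2⟩)
          · exact Or.inl rfl
          · rw [← hDd δ h1] at h2
            exact Or.inr ⟨h1, h2⟩
      rw [hset]
    have hIpr : Shelah836.Ipr x sStar A β = Shelah836.Ipr x sStar A' β := by
      rw [Shelah836.Ipr, Shelah836.Ipr, hDd β le_rfl]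
    dsimp only
    rw [hgg, hIpr, hDd β le_rfl]
  · intro A hA β hβα
    have hA' : ∀ γ ≤ β, Cardinal.mk ↥((A γ).1 ∪ (A γ).2) < x.lam := by
      intro γ hγ
      have h := hA γ (lt_of_le_of_lt hγ hβα)
      have h1 : (1 : Cardinal) + x.lam = x.lam := by
        rw [add_comm]
        exact Cardinal.add_one_of_aleph0_le hreg.aleph0_le
      rw [h1] at h
      exact (Cardinal.mk_union_le _ _).trans_lt h
    have hβlam : β < x.lam.ord := hβα.trans (hα.trans_le x.alphaStar_le)
    have hD : Shelah836.Dd x sStar A β < x.lam.ord :=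
      Shelah836.Dd_lt x sStar A hreg hucard hβlam hA'
    refine ⟨?_, Set.empty_subset _, ?_, ?_, ?_⟩
    · exact Shelah836.graph_isPartialIso x sStar tStar hts _ _
        (Shelah836.sStar_mem_Ipr x sStar A β)
        (Shelah836.ccg_star x sStar A hts hWD hα hω hβα hD hgt0 hht0)
        (fun s₁ s₂ h₁ h₂ hS =>
          Shelah836.ccg_pair x sStar A hWD hT hα hω hβα hD h₁ h₂ hS)
    · intro γ hγβ
      rintro ⟨m, m'⟩ ⟨hm, e⟩
      have hγα : γ < α := hγβ.trans hβα
      have hγlam : γ < x.lam.ord := hγα.trans (hα.trans_le x.alphaStar_le)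
      have hD' : Shelah836.Dd x sStar A γ < x.lam.ord :=
        Shelah836.Dd_lt x sStar A hreg hucard hγlam (fun δ hδ => hA' δ (hδ.trans hγβ.le))
      have hmβ : m.1 ∈ Shelah836.Ipr x sStar A β := fun γ' hγ' =>
        (hm γ' hγ').trans_le (Shelah836.Dd_mono x sStar A hreg hucard hγβ.le le_rfl hA')
      refine ⟨hmβ, ?_⟩
      dsimp only at e ⊢
      rw [e, Shelah836.fc_mem x _ _ hm, Shelah836.fc_mem x _ _ hmβ,
        Shelah836.ccg_agree x sStar A hreg hucard hWD hα hω hγβ.le hβα hA' hD' hD hm]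
    · intro m hm
      have hmI : m.1 ∈ Shelah836.Ipr x sStar A β :=
        Shelah836.mem_Ipr_of_mem x sStar A hreg hucard hA' (Or.inl hm)
      exact ⟨(m, x.fc (Shelah836.Ipr x sStar A β)
        (Shelah836.ccg x (Shelah836.gg x sStar A β) (Shelah836.Dd x sStar A β)) m),
        ⟨hmI, rfl⟩, rfl⟩
    · intro m hm
      have hmI : m.1 ∈ Shelah836.Ipr x sStar A β :=
        Shelah836.mem_Ipr_of_mem x sStar A hreg hucard hA' (Or.inr hm)
      refine ⟨(⟨m.1, m.2 * (Shelah836.ccg x (Shelah836.gg x sStar A β)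
        (Shelah836.Dd x sStar A β) m.1)⁻¹⟩, m), ⟨hmI, ?_⟩, rfl⟩
      have e2 : x.fc (Shelah836.Ipr x sStar A β)
          (Shelah836.ccg x (Shelah836.gg x sStar A β) (Shelah836.Dd x sStar A β))
          (⟨m.1, m.2 * (Shelah836.ccg x (Shelah836.gg x sStar A β)
            (Shelah836.Dd x sStar A β) m.1)⁻¹⟩ : x.M)
          = ⟨m.1, m.2 * (Shelah836.ccg x (Shelah836.gg x sStar A β)
              (Shelah836.Dd x sStar A β) m.1)⁻¹
            * (Shelah836.ccg x (Shelah836.gg x sStar A β)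
              (Shelah836.Dd x sStar A β) m.1)⟩ :=
        Shelah836.fc_mem x _ _ hmI
      show m = _
      rw [e2, inv_mul_cancel_right]
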